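/- There exist a commonotone Borel subset E ⊆ ℝ², a constant C ≥ 1, and Borel measurable functions λ : ℝ² → [0,1] and p₁, p₂ : ℝ² → ℝ² with p₁(x,y), p₂(x,y) ∈ E for all (x,y), such that for every (x, y) ∈ ℝ²: (i) (x, y) = λ(x,y) · p₁(x,y) + (1 − λ(x,y)) · p₂(x,y); (ii) ‖pᵢ(x,y)‖ ≤ C · max(‖(x,y)‖, 1) for i = 1, 2, where ‖·‖ denotes the Euclidean norm on ℝ². -/

import Mathlib

open MeasureTheory

/-- A subset `E ⊆ ℝ²` is commonotone if `(x - x')(y - y') ≥ 0` for all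
`(x, y), (x', y') ∈ E`. -/
def CommonotoneSet (E : Set (ℝ × ℝ)) : Prop :=
  ∀ p ∈ E, ∀ q ∈ E, 0 ≤ (p.1 - q.1) * (p.2 - q.2)

/-- The Euclidean norm on `ℝ²`. -/
noncomputable def euclNorm (p : ℝ × ℝ) : ℝ := Real.sqrt (p.1 ^ 2 + p.2 ^ 2)

/-- The staircase set. -/
def Eset : Set (ℝ × ℝ) :=
  ⋃ k : ℤ, (Set.Icc ((16:ℝ)^k) ((16:ℝ)^(k+1)) ×ˢ ({((16:ℝ)^k)} : Set ℝ) ∪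
    Set.Icc (-(16:ℝ)^(k+1)) (-(16:ℝ)^k) ×ˢ ({(-(16:ℝ)^k)} : Set ℝ))

/-- Scale function. -/
noncomputable def scaleFn (m : ℝ) : ℝ := (16:ℝ) ^ (Int.log 16 (max m 1) + 2)

noncomputable def Mfun (z : ℝ × ℝ) : ℝ := max (max |z.1| |z.2|) 1

noncomputable def Afun (z : ℝ × ℝ) : ℝ := scaleFn (Mfun z)

noncomputable def lamF (z : ℝ × ℝ) : ℝ := (1 + z.2 / Afun z) / 2

noncomputable def p2F (z : ℝ × ℝ) : ℝ × ℝ := (-(3 * Afun z), -Afun z)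

noncomputable def p1F (z : ℝ × ℝ) : ℝ × ℝ :=
  ((z.1 + 3 * Afun z * (1 - lamF z)) / lamF z, Afun z)

lemma cast16 : ((16:ℕ):ℝ) = (16:ℝ) := by norm_num

lemma scaleFn_mono : Monotone scaleFn := by
  intro a b hab
  unfold scaleFn
  apply zpow_le_zpow_right₀ (by norm_num : (1:ℝ) ≤ 16)
  have : (0:ℝ) < max a 1 := lt_of_lt_of_le one_pos (le_max_right _ _)
  exact add_le_add_left (Int.log_mono_right this (max_le_max hab le_rfl)) 2

lemma Mfun_ge_one (z : ℝ × ℝ) : 1 ≤ Mfun z := le_max_right _ _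

lemma Mfun_ge_abs1 (z : ℝ × ℝ) : |z.1| ≤ Mfun z :=
  le_trans (le_max_left _ _) (le_max_left _ _)

lemma Mfun_ge_abs2 (z : ℝ × ℝ) : |z.2| ≤ Mfun z :=
  le_trans (le_max_right _ _) (le_max_left _ _)

lemma Afun_pos (z : ℝ × ℝ) : 0 < Afun z :=
  zpow_pos (by norm_num) _

lemma Afun_ge (z : ℝ × ℝ) : 16 * Mfun z ≤ Afun z := by
  have hM : (0:ℝ) < Mfun z := lt_of_lt_of_le one_pos (Mfun_ge_one z)
  have h1 : Mfun z < ((16:ℕ):ℝ) ^ (Int.log 16 (Mfun z) + 1) :=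
    Int.lt_zpow_succ_log_self (by norm_num) (Mfun z)
  have hmax : max (Mfun z) 1 = Mfun z := max_eq_left (Mfun_ge_one z)
  unfold Afun scaleFn
  rw [hmax]
  have h2 : (16:ℝ) ^ (Int.log 16 (Mfun z) + 2) =
      16 * ((16:ℕ):ℝ) ^ (Int.log 16 (Mfun z) + 1) := by
    rw [show Int.log 16 (Mfun z) + 2 = (Int.log 16 (Mfun z) + 1) + 1 by ring,
      zpow_add_one₀ (by norm_num : (16:ℝ) ≠ 0), cast16]
    ring
  rw [h2]
  nlinarith
 
lemma Afun_le (z : ℝ × ℝ) : Afun z ≤ 256 * Mfun z := by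
  have hM : (0:ℝ) < Mfun z := lt_of_lt_of_le one_pos (Mfun_ge_one z)
  have h1 : ((16:ℕ):ℝ) ^ (Int.log 16 (Mfun z)) ≤ Mfun z :=
    Int.zpow_log_le_self (by norm_num) hM
  have hmax : max (Mfun z) 1 = Mfun z := max_eq_left (Mfun_ge_one z)
  unfold Afun scaleFn
  rw [hmax]
  have h2 : (16:ℝ) ^ (Int.log 16 (Mfun z) + 2) =
      256 * ((16:ℕ):ℝ) ^ (Int.log 16 (Mfun z)) := by
    rw [zpow_add₀ (by norm_num : (16:ℝ) ≠ 0), cast16]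
    norm_num
    ring
  rw [h2]
  nlinarith

lemma abs2_le (z : ℝ × ℝ) : 16 * |z.2| ≤ Afun z :=
  le_trans (by nlinarith [Mfun_ge_abs2 z, abs_nonneg z.2] : 16 * |z.2| ≤ 16 * Mfun z) (Afun_ge z)

lemma abs1_le (z : ℝ × ℝ) : 16 * |z.1| ≤ Afun z :=
  le_trans (by nlinarith [Mfun_ge_abs1 z, abs_nonneg z.1] : 16 * |z.1| ≤ 16 * Mfun z) (Afun_ge z)

lemma lamF_bounds (z : ℝ × ℝ) : 15/32 ≤ lamF z ∧ lamF z ≤ 17/32 := by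
  have hA := Afun_pos z
  have h2 := abs2_le z
  have hy := abs_le.mp (le_of_eq (rfl : |z.2| = |z.2|))
  have hub : z.2 / Afun z ≤ 1/16 := by
    rw [div_le_iff₀ hA]; nlinarith [abs_le.mp (le_refl |z.2|)]
  have hlb : -(1/16 : ℝ) ≤ z.2 / Afun z := by
    rw [le_div_iff₀ hA]; nlinarith [abs_le.mp (le_refl |z.2|)]
  unfold lamF
  constructor <;> linarith

lemma mem_Eset_iff {p : ℝ × ℝ} : p ∈ Eset ↔ ∃ k : ℤ,
    (p.2 = (16:ℝ)^k ∧ (16:ℝ)^k ≤ p.1 ∧ p.1 ≤ (16:ℝ)^(k+1)) ∨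
    (p.2 = -(16:ℝ)^k ∧ -(16:ℝ)^(k+1) ≤ p.1 ∧ p.1 ≤ -(16:ℝ)^k) := by
  unfold Eset
  simp only [Set.mem_iUnion, Set.mem_union, Set.mem_prod, Set.mem_Icc, Set.mem_singleton_iff]
  constructor
  · rintro ⟨k, (⟨⟨h1, h2⟩, h3⟩ | ⟨⟨h1, h2⟩, h3⟩)⟩
    · exact ⟨k, Or.inl ⟨h3, h1, h2⟩⟩
    · exact ⟨k, Or.inr ⟨h3, h1, h2⟩⟩
  · rintro ⟨k, (⟨h3, h1, h2⟩ | ⟨h3, h1, h2⟩)⟩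
    · exact ⟨k, Or.inl ⟨⟨h1, h2⟩, h3⟩⟩
    · exact ⟨k, Or.inr ⟨⟨h1, h2⟩, h3⟩⟩

lemma Eset_measurable : MeasurableSet Eset := by
  unfold Eset
  exact MeasurableSet.iUnion fun k =>
    ((measurableSet_Icc.prod (measurableSet_singleton _)).union
      (measurableSet_Icc.prod (measurableSet_singleton _)))

lemma Eset_key {p q : ℝ × ℝ} (hp : p ∈ Eset) (hq : q ∈ Eset) (h : p.2 < q.2) :
    p.1 ≤ q.1 := by
  obtain ⟨k, hk⟩ := mem_Eset_iff.mp hp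
  obtain ⟨l, hl⟩ := mem_Eset_iff.mp hq
  have h16 : (1:ℝ) < 16 := by norm_num
  rcases hk with ⟨hk2, hk1a, hk1b⟩ | ⟨hk2, hk1a, hk1b⟩ <;>
    rcases hl with ⟨hl2, hl1a, hl1b⟩ | ⟨hl2, hl1a, hl1b⟩
  · -- both positive
    rw [hk2, hl2] at h
    have hkl : k < l := (zpow_lt_zpow_iff_right₀ h16).mp h
    have : (16:ℝ)^(k+1) ≤ (16:ℝ)^l := zpow_le_zpow_right₀ (le_of_lt h16) (by omega)
    linarith
  · -- p pos, q neg : impossible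
    rw [hk2, hl2] at h
    have h1 : (0:ℝ) < (16:ℝ)^k := zpow_pos (by norm_num) _
    have h2 : (0:ℝ) < (16:ℝ)^l := zpow_pos (by norm_num) _
    linarith
  · -- p neg, q pos
    have h1 : (0:ℝ) < (16:ℝ)^k := zpow_pos (by norm_num) _
    have h2 : (0:ℝ) < (16:ℝ)^l := zpow_pos (by norm_num) _
    linarith
  · -- both neg
    rw [hk2, hl2] at h
    have hlk : l < k := by
      have : (16:ℝ)^l < (16:ℝ)^k := by linarith
      exact (zpow_lt_zpow_iff_right₀ h16).mp this
    have : (16:ℝ)^(l+1) ≤ (16:ℝ)^k := zpow_le_zpow_right₀ (le_of_lt h16) (by omega)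
    linarith

lemma Eset_commonotone : CommonotoneSet Eset := by
  intro p hp q hq
  rcases lt_trichotomy p.2 q.2 with h | h | h
  · have := Eset_key hp hq h
    nlinarith
  · rw [h]; simp
  · have := Eset_key hq hp h
    nlinarith

lemma Afun_eq_zpow (z : ℝ × ℝ) :
    Afun z = (16:ℝ) ^ (Int.log 16 (Mfun z) + 2) := by
  unfold Afun scaleFn
  rw [max_eq_left (Mfun_ge_one z)]

lemma s_bounds (z : ℝ × ℝ) :
    Afun z ≤ (p1F z).1 ∧ (p1F z).1 ≤ 4 * Afun z := by
  have hA := Afun_pos z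
  have hx := abs_le.mp (le_refl |z.1|)
  have hxa := abs1_le z
  obtain ⟨hl1, hl2⟩ := lamF_bounds z
  have hlpos : 0 < lamF z := by linarith
  have hN1 : Afun z * lamF z ≤ z.1 + 3 * Afun z * (1 - lamF z) := by nlinarith
  have hN2 : z.1 + 3 * Afun z * (1 - lamF z) ≤ (4 * Afun z) * lamF z := by nlinarith
  constructor
  · exact (le_div_iff₀ hlpos).mpr hN1
  · exact (div_le_iff₀ hlpos).mpr hN2

lemma p1F_mem (z : ℝ × ℝ) : p1F z ∈ Eset := by
  have hA := Afun_pos z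
  obtain ⟨hs1, hs2⟩ := s_bounds z
  rw [mem_Eset_iff]
  refine ⟨Int.log 16 (Mfun z) + 2, Or.inl ⟨?_, ?_, ?_⟩⟩
  · exact (Afun_eq_zpow z)
  · rw [← Afun_eq_zpow z]; exact hs1
  · rw [show (Int.log 16 (Mfun z) + 2) + 1 = (Int.log 16 (Mfun z) + 2) + 1 from rfl,
      zpow_add_one₀ (by norm_num : (16:ℝ) ≠ 0), ← Afun_eq_zpow z]
    linarith

lemma p2F_mem (z : ℝ × ℝ) : p2F z ∈ Eset := by
  have hA := Afun_pos z
  rw [mem_Eset_iff]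
  refine ⟨Int.log 16 (Mfun z) + 2, Or.inr ⟨?_, ?_, ?_⟩⟩
  · show -Afun z = _
    rw [← Afun_eq_zpow z]
  · rw [zpow_add_one₀ (by norm_num : (16:ℝ) ≠ 0), ← Afun_eq_zpow z]
    show -(Afun z * 16) ≤ -(3 * Afun z)
    linarith
  · show -(3 * Afun z) ≤ _
    rw [← Afun_eq_zpow z]
    linarith

lemma combo (z : ℝ × ℝ) : z = lamF z • p1F z + (1 - lamF z) • p2F z := by
  have hA := Afun_pos z
  have hA' : Afun z ≠ 0 := ne_of_gt hA
  obtain ⟨hl1, hl2⟩ := lamF_bounds z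
  have hlpos : lamF z ≠ 0 := by positivity
  ext
  · show z.1 = lamF z * ((z.1 + 3 * Afun z * (1 - lamF z)) / lamF z) +
      (1 - lamF z) * (-(3 * Afun z))
    field_simp
    ring
  · show z.2 = lamF z * Afun z + (1 - lamF z) * (-Afun z)
    have : lamF z = (1 + z.2 / Afun z) / 2 := rfl
    rw [this]
    field_simp
    ring

lemma euclNorm_le (a b : ℝ) : euclNorm (a, b) ≤ |a| + |b| := by
  unfold euclNorm
  have h : (a^2 + b^2) ≤ (|a| + |b|)^2 := by
    have := abs_nonneg a; have := abs_nonneg b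
    nlinarith [sq_abs a, sq_abs b, mul_nonneg (abs_nonneg a) (abs_nonneg b)]
  calc Real.sqrt (a^2 + b^2) ≤ Real.sqrt ((|a| + |b|)^2) := Real.sqrt_le_sqrt h
  _ = |a| + |b| := by
      rw [Real.sqrt_sq (by positivity)]

lemma Mfun_le_norm (z : ℝ × ℝ) : Mfun z ≤ max (euclNorm z) 1 := by
  have h1 : |z.1| ≤ euclNorm z := by
    unfold euclNorm
    rw [← Real.sqrt_sq_eq_abs]
    exact Real.sqrt_le_sqrt (by nlinarith [sq_nonneg z.2])
  have h2 : |z.2| ≤ euclNorm z := by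
    unfold euclNorm
    rw [← Real.sqrt_sq_eq_abs]
    exact Real.sqrt_le_sqrt (by nlinarith [sq_nonneg z.1])
  unfold Mfun
  simp only [max_le_iff]
  exact ⟨⟨le_max_of_le_left h1, le_max_of_le_left h2⟩, le_max_right _ _⟩

lemma measurable_Afun : Measurable Afun := by
  have h1 : Measurable Mfun := by
    unfold Mfun
    exact ((measurable_fst.abs.max measurable_snd.abs).max measurable_const)
  exact (scaleFn_mono.measurable).comp h1

theorem exists_special_commonotone_set :
    ∃ (E : Set (ℝ × ℝ)) (C : ℝ) (lam : ℝ × ℝ → ℝ) (p₁ p₂ : ℝ × ℝ → ℝ × ℝ),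
      MeasurableSet E ∧ CommonotoneSet E ∧ 1 ≤ C ∧
      Measurable lam ∧ Measurable p₁ ∧ Measurable p₂ ∧
      (∀ z : ℝ × ℝ, lam z ∈ Set.Icc (0 : ℝ) 1) ∧
      (∀ z : ℝ × ℝ, p₁ z ∈ E ∧ p₂ z ∈ E) ∧
      (∀ z : ℝ × ℝ, z = lam z • p₁ z + (1 - lam z) • p₂ z) ∧
      (∀ z : ℝ × ℝ, euclNorm (p₁ z) ≤ C * max (euclNorm z) 1 ∧
        euclNorm (p₂ z) ≤ C * max (euclNorm z) 1) := by
  refine ⟨Eset, 2048, lamF, p1F, p2F, Eset_measurable, Eset_commonotone,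
    by norm_num, ?_, ?_, ?_, ?_, fun z => ⟨p1F_mem z, p2F_mem z⟩, combo, ?_⟩
  · -- Measurable lamF
    unfold lamF
    exact ((measurable_const.add (measurable_snd.div measurable_Afun)).div measurable_const)
  · -- Measurable p1F
    unfold p1F
    apply Measurable.prod
    · simp only
      apply Measurable.div
      · exact measurable_fst.add ((measurable_const.mul measurable_Afun).mul
          (measurable_const.sub ((measurable_const.add
            (measurable_snd.div measurable_Afun)).div measurable_const)))
      · exact ((measurable_const.add (measurable_snd.div measurable_Afun)).div measurable_const)
    · exact measurable_Afun
  · -- Measurable p2F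
    unfold p2F
    exact (measurable_const.mul measurable_Afun).neg.prod measurable_Afun.neg
  · -- lam in [0,1]
    intro z
    obtain ⟨h1, h2⟩ := lamF_bounds z
    exact ⟨by linarith, by linarith⟩
  · -- norm bounds
    intro z
    have hA := Afun_pos z
    have hAle := Afun_le z
    have hMle := Mfun_le_norm z
    have hmax1 : (1:ℝ) ≤ max (euclNorm z) 1 := le_max_right _ _
    obtain ⟨hs1, hs2⟩ := s_bounds z
    constructor
    · calc euclNorm (p1F z) ≤ |(p1F z).1| + |(p1F z).2| := by
            rw [show p1F z = ((p1F z).1, (p1F z).2) from rfl]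
            exact euclNorm_le _ _
        _ ≤ 4 * Afun z + Afun z := by
            rw [abs_of_pos (lt_of_lt_of_le hA hs1),
              show (p1F z).2 = Afun z from rfl, abs_of_pos hA]
            linarith
        _ = 5 * Afun z := by ring
        _ ≤ 1280 * Mfun z := by linarith
        _ ≤ 2048 * max (euclNorm z) 1 := by nlinarith
    · calc euclNorm (p2F z) ≤ |(p2F z).1| + |(p2F z).2| := by
            rw [show p2F z = ((p2F z).1, (p2F z).2) from rfl]
            exact euclNorm_le _ _
        _ ≤ 3 * Afun z + Afun z := by
            rw [show (p2F z).1 = -(3 * Afun z) from rfl,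
              show (p2F z).2 = -Afun z from rfl, abs_neg, abs_neg,
              abs_of_pos (by linarith), abs_of_pos hA]
        _ = 4 * Afun z := by ring
        _ ≤ 1024 * Mfun z := by linarith
        _ ≤ 2048 * max (euclNorm z) 1 := by nlinarith
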